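/- Let k ≥ 1 be an integer and let {X_i}_{i≥1} be independent, identically distributed random variables with values in the positive integers such that E[X^{1/k}] = ∞, and let W_n = X_1 + ... + X_n. Then the probability that the sequence {W_n}_{n≥1} is asymptotically k-complete is 0. -/

import Mathlib

open MeasureTheory ProbabilityTheory
open scoped ENNReal

/-- Pointwise counting bound: `x^(1/k) ≤ L * #{n | (L*n)^k < x}` for naturals. -/
lemma stmt4_aux_pointwise (k L x : ℕ) (hk : 1 ≤ k) (hL : 1 ≤ L) :
    (x : ℝ≥0∞) ^ ((1 : ℝ) / k) ≤
      (L : ℝ≥0∞) * ∑' n : ℕ, Set.indicator {y : ℕ | (L * n) ^ k < y} (fun _ => (1 : ℝ≥0∞)) x := by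
  classical
  set T : Finset ℕ := (Finset.range x).filter (fun n => (L * n) ^ k < x) with hT
  have hvanish : ∀ n ∉ Finset.range x,
      Set.indicator {y : ℕ | (L * n) ^ k < y} (fun _ => (1 : ℝ≥0∞)) x = 0 := by
    intro n hn
    rw [Finset.mem_range, not_lt] at hn
    have h1 : ¬ ((L * n) ^ k < x) := by
      have : n ≤ (L * n) ^ k := by
        calc n ≤ L * n := Nat.le_mul_of_pos_left n hL
        _ ≤ (L * n) ^ k := Nat.le_self_pow (by omega) _
      omega
    simp [Set.indicator_apply, Set.mem_setOf_eq, h1]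
  have htsum : ∑' n : ℕ, Set.indicator {y : ℕ | (L * n) ^ k < y} (fun _ => (1 : ℝ≥0∞)) x
      = (T.card : ℝ≥0∞) := by
    rw [tsum_eq_sum hvanish]
    rw [hT]
    rw [Finset.sum_indicator_eq_sum_filter]
    simp only [Set.mem_setOf_eq]
    rw [Finset.sum_const, nsmul_eq_mul, mul_one]
  rw [htsum]
  -- key: x ≤ (L * T.card) ^ k
  have hkey : x ≤ (L * T.card) ^ k := by
    by_contra hcon
    push_neg at hcon
    have hsub : Finset.range (T.card + 1) ⊆ T := by
      intro n hn
      rw [Finset.mem_range] at hn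
      have hnc : n ≤ T.card := by omega
      have h1 : (L * n) ^ k ≤ (L * T.card) ^ k :=
        Nat.pow_le_pow_left (Nat.mul_le_mul_left _ hnc) _
      have h2 : n ≤ (L * T.card) ^ k := by
        calc n ≤ L * n := Nat.le_mul_of_pos_left n hL
        _ ≤ L * T.card := Nat.mul_le_mul_left _ hnc
        _ ≤ (L * T.card) ^ k := Nat.le_self_pow (by omega) _
      rw [hT, Finset.mem_filter, Finset.mem_range]
      exact ⟨by omega, by omega⟩
    have := Finset.card_le_card hsub
    simp at this
  -- transfer to ℝ≥0∞ via rpow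
  have hx : (x : ℝ≥0∞) ≤ ((L * T.card : ℕ) : ℝ≥0∞) ^ (k : ℕ) := by
    rw [← Nat.cast_pow]
    exact_mod_cast Nat.cast_le.mpr hkey
  have hkne : (k : ℝ) ≠ 0 := by
    simp only [ne_eq, Nat.cast_eq_zero]; omega
  calc (x : ℝ≥0∞) ^ ((1 : ℝ) / k)
      ≤ (((L * T.card : ℕ) : ℝ≥0∞) ^ (k : ℕ)) ^ ((1 : ℝ) / k) :=
        ENNReal.rpow_le_rpow hx (by positivity)
    _ = ((L * T.card : ℕ) : ℝ≥0∞) := by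
        rw [← ENNReal.rpow_natCast _ k, ← ENNReal.rpow_mul]
        rw [mul_one_div, div_self hkne, ENNReal.rpow_one]
    _ = (L : ℝ≥0∞) * (T.card : ℝ≥0∞) := by push_cast; ring

/-- Divergence of the tail sums along `(L*n)^k` from the infinite `1/k`-moment. -/
lemma stmt4_aux_div {Ω : Type*} [MeasurableSpace Ω] (μ : Measure Ω)
    (k : ℕ) (hk : 1 ≤ k) (Y : Ω → ℕ) (hY : Measurable Y)
    (hmom : ∫⁻ ω, (Y ω : ℝ≥0∞) ^ ((1 : ℝ) / k) ∂μ = ⊤) (L : ℕ) (hL : 1 ≤ L) :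
    ∑' n : ℕ, μ {ω | (L * n) ^ k < Y ω} = ⊤ := by
  have hms : ∀ n : ℕ, MeasurableSet {ω | (L * n) ^ k < Y ω} := by
    intro n
    exact hY measurableSet_Ioi
  have hpt : ∀ ω, (Y ω : ℝ≥0∞) ^ ((1 : ℝ) / k) ≤
      (L : ℝ≥0∞) * ∑' n : ℕ,
        Set.indicator {ω' | (L * n) ^ k < Y ω'} (fun _ => (1 : ℝ≥0∞)) ω := by
    intro ω
    have h := stmt4_aux_pointwise k L (Y ω) hk hL
    have heq : ∀ n : ℕ, Set.indicator {y : ℕ | (L * n) ^ k < y} (fun _ => (1 : ℝ≥0∞)) (Y ω)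
        = Set.indicator {ω' | (L * n) ^ k < Y ω'} (fun _ => (1 : ℝ≥0∞)) ω := by
      intro n
      by_cases hcc : (L * n) ^ k < Y ω <;>
        simp [Set.indicator_apply, Set.mem_setOf_eq, hcc]
    refine h.trans (le_of_eq ?_)
    rw [tsum_congr heq]
  have hle : (⊤ : ℝ≥0∞) ≤ (L : ℝ≥0∞) * ∑' n : ℕ, μ {ω | (L * n) ^ k < Y ω} := by
    calc (⊤ : ℝ≥0∞) = ∫⁻ ω, (Y ω : ℝ≥0∞) ^ ((1 : ℝ) / k) ∂μ := hmom.symm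
    _ ≤ ∫⁻ ω, (L : ℝ≥0∞) * ∑' n : ℕ,
          Set.indicator {ω' | (L * n) ^ k < Y ω'} (fun _ => (1 : ℝ≥0∞)) ω ∂μ :=
        lintegral_mono hpt
    _ = (L : ℝ≥0∞) * ∫⁻ ω, ∑' n : ℕ,
          Set.indicator {ω' | (L * n) ^ k < Y ω'} (fun _ => (1 : ℝ≥0∞)) ω ∂μ :=
        lintegral_const_mul' _ _ (by simp)
    _ = (L : ℝ≥0∞) * ∑' n : ℕ, ∫⁻ ω,
          Set.indicator {ω' | (L * n) ^ k < Y ω'} (fun _ => (1 : ℝ≥0∞)) ω ∂μ := by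
        congr 1
        exact lintegral_tsum fun n =>
          ((measurable_const (a := (1 : ℝ≥0∞))).indicator (hms n)).aemeasurable
    _ = (L : ℝ≥0∞) * ∑' n : ℕ, μ {ω | (L * n) ^ k < Y ω} := by
        congr 1
        refine tsum_congr fun n => ?_
        rw [lintegral_indicator_const (hms n), one_mul]
  rw [top_le_iff] at hle
  rcases ENNReal.mul_eq_top.mp hle with h | h
  · exact h.2
  · exact absurd h.1 (by simp)

/-- Deterministic core: if every `m ≥ N` is a sum of `k` distinct terms of the
strictly monotone sequence `w`, then consecutive gaps are controlled. -/
lemma stmt4_aux_det (k N n : ℕ) (hk : 1 ≤ k) (w : ℕ → ℕ) (hsm : StrictMono w)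
    (hge : ∀ j, j ≤ w j)
    (hrep : ∀ m : ℕ, N ≤ m → ∃ s : Finset ℕ, s.card = k ∧ (∀ i ∈ s, 1 ≤ i) ∧ ∑ i ∈ s, w i = m)
    (hN : N ≤ n) (hn1 : 1 ≤ n) :
    w (n + 1) ≤ w n + 2 * k * (n ^ k + N) := by
  classical
  -- Step A: `w n ≤ n ^ k + N` by a counting argument.
  have hWn : w n ≤ n ^ k + N := by
    rcases lt_or_ge (w n) N with h | h
    · omega
    · set f : ℕ → Finset ℕ := fun m => if hm : N ≤ m then (hrep m hm).choose else ∅ with hf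
      have hspec : ∀ m, (hm : N ≤ m) →
          (f m).card = k ∧ (∀ i ∈ f m, 1 ≤ i) ∧ ∑ i ∈ f m, w i = m := by
        intro m hm
        rw [hf]
        simp only [dif_pos hm]
        exact (hrep m hm).choose_spec
      have hmaps : ∀ m ∈ Finset.Icc N (w n), f m ∈ (Finset.Icc 1 n).powersetCard k := by
        intro m hm
        rw [Finset.mem_Icc] at hm
        obtain ⟨hc, hp, hs⟩ := hspec m hm.1
        rw [Finset.mem_powersetCard]
        refine ⟨fun i hi => ?_, hc⟩
        rw [Finset.mem_Icc]
        refine ⟨hp i hi, ?_⟩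
        have h1 : w i ≤ m := by
          rw [← hs]
          exact Finset.single_le_sum (fun j _ => Nat.zero_le (w j)) hi
        have h2 : w i ≤ w n := le_trans h1 hm.2
        exact hsm.le_iff_le.mp h2
      have hinj : Set.InjOn f (Finset.Icc N (w n)) := by
        intro m hm m' hm' hmm
        rw [Finset.coe_Icc, Set.mem_Icc] at hm hm'
        have h1 := (hspec m hm.1).2.2
        have h2 := (hspec m' hm'.1).2.2
        rw [← h1, ← h2, hmm]
      have hcard := Finset.card_le_card_of_injOn f hmaps hinj
      rw [Nat.card_Icc, Finset.card_powersetCard, Nat.card_Icc] at hcard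
      have hch : (n + 1 - 1).choose k ≤ n ^ k := by
        simpa using Nat.choose_le_pow n k
      omega
  -- Step B: gap bound by exhibiting an unrepresentable integer otherwise.
  by_contra hbad
  push_neg at hbad
  have hwn1 : 1 ≤ w n := le_trans hn1 (hge n)
  have hkw : w n ≤ k * w n := Nat.le_mul_of_pos_left (w n) hk
  have hm : N ≤ k * w n + 1 := by
    have := hge n
    omega
  obtain ⟨s, hc, hp, hs⟩ := hrep (k * w n + 1) hm
  by_cases hall : ∀ i ∈ s, i ≤ n
  · have hsum : ∑ i ∈ s, w i ≤ s.card * w n := by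
      have := Finset.sum_le_card_nsmul s w (w n)
        (fun i hi => hsm.monotone (hall i hi))
      simpa [smul_eq_mul] using this
    rw [hc, hs] at hsum
    omega
  · push_neg at hall
    obtain ⟨j, hj, hjn⟩ := hall
    have h1 : w (n + 1) ≤ w j := hsm.monotone hjn
    have h2 : w j ≤ ∑ i ∈ s, w i := Finset.single_le_sum (fun i _ => Nat.zero_le (w i)) hj
    have h4 : 2 * k * (w n) ≤ 2 * k * (n ^ k + N) := Nat.mul_le_mul_left _ hWn
    -- hbad : w n + 2 k (n^k+N) < w (n+1) ≤ w j ≤ ∑ = k w n + 1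
    have h5 : 2 * (k * w n) = 2 * k * w n := by ring
    rw [hs] at h2
    have h6 : 2 * k * w n ≤ 2 * k * (n ^ k + N) := h4
    -- combine: w n + 2*k*w n ≤ w n + 2k(n^k+N) < w(n+1) ≤ k*w n + 1
    have h7 : w n + 2 * k * w n < k * w n + 1 := by omega
    nlinarith [hwn1, hk]

theorem stmt4
    {Ω : Type*} [MeasurableSpace Ω] (μ : Measure Ω) [IsProbabilityMeasure μ]
    (k : ℕ) (hk : 1 ≤ k)
    (X : ℕ → Ω → ℕ)
    (hmeas : ∀ i, Measurable (X i))
    (hpos : ∀ i ω, 0 < X i ω)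
    (hindep : iIndepFun X μ)
    (hident : ∀ i, IdentDistrib (X i) (X 1) μ μ)
    (hmom : ∫⁻ ω, (X 1 ω : ℝ≥0∞) ^ ((1 : ℝ) / k) ∂μ = ⊤)
    (W : ℕ → Ω → ℕ)
    (hW : ∀ n ω, W n ω = ∑ i ∈ Finset.Icc 1 n, X i ω) :
    μ {ω | ∃ N : ℕ, ∀ m : ℕ, N ≤ m →
      ∃ s : Finset ℕ, s.card = k ∧ (∀ i ∈ s, 1 ≤ i) ∧ ∑ i ∈ s, W i ω = m} = 0 := by
  classical
  -- basic facts about W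
  have hWsucc : ∀ m ω, W (m + 1) ω = W m ω + X (m + 1) ω := by
    intro m ω
    rw [hW, hW, Finset.sum_Icc_succ_top (Nat.le_add_left 1 m)]
  have hWmono : ∀ ω, StrictMono (fun n => W n ω) := by
    intro ω
    apply strictMono_nat_of_lt_succ
    intro n
    have := hpos (n + 1) ω
    rw [hWsucc]
    omega
  have hWge : ∀ ω n, n ≤ W n ω := by
    intro ω n
    rw [hW]
    calc n = (Finset.Icc 1 n).card * 1 := by rw [Nat.card_Icc]; omega
    _ ≤ ∑ i ∈ Finset.Icc 1 n, X i ω := by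
        have := Finset.card_nsmul_le_sum (Finset.Icc 1 n) (fun i => X i ω) 1
          (fun i _ => hpos i ω)
        simpa [smul_eq_mul] using this
  -- decompose the target set
  have hsub : {ω | ∃ N : ℕ, ∀ m : ℕ, N ≤ m →
      ∃ s : Finset ℕ, s.card = k ∧ (∀ i ∈ s, 1 ≤ i) ∧ ∑ i ∈ s, W i ω = m}
      = ⋃ N : ℕ, {ω | ∀ m : ℕ, N ≤ m →
      ∃ s : Finset ℕ, s.card = k ∧ (∀ i ∈ s, 1 ≤ i) ∧ ∑ i ∈ s, W i ω = m} := by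
    ext ω
    simp [Set.mem_iUnion]
  rw [hsub]
  refine measure_iUnion_null fun N => ?_
  -- the independent events
  set c : ℕ → ℕ := fun m => 2 * k * (m ^ k + N) with hc
  set s : ℕ → Set Ω := fun n => X n ⁻¹' Set.Ioi (c (n - 1)) with hsdef
  have hsm : ∀ n, MeasurableSet (s n) := fun n => (hmeas n) measurableSet_Ioi
  have hindepS : iIndepSet s μ := by
    rw [iIndepSet_iff_meas_biInter hsm]
    intro t
    exact hindep.meas_biInter (fun i _ => ⟨Set.Ioi (c (i - 1)), measurableSet_Ioi, rfl⟩)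
  -- divergence of the sum of probabilities
  set L : ℕ := 2 * k * (N + 1) with hL
  have hL1 : 1 ≤ L := by
    have : 1 ≤ 2 * k := by omega
    calc 1 ≤ 2 * k := this
    _ ≤ 2 * k * (N + 1) := Nat.le_mul_of_pos_right _ (by omega)
  have hdiv0 := stmt4_aux_div μ k hk (X 1) (hmeas 1) hmom L hL1
  have hr0 : μ {ω | (L * 0) ^ k < X 1 ω} ≠ ⊤ := by
    exact (measure_lt_top μ _).ne
  have htail : ∑' m : ℕ, μ {ω | (L * (m + 1)) ^ k < X 1 ω} = ⊤ :=
    ENNReal.tsum_add_one_eq_top hdiv0 hr0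
  have harith : ∀ m : ℕ, c m ≤ (L * (m + 1)) ^ k := by
    intro m
    have h1 : m ^ k ≤ (m + 1) ^ k := Nat.pow_le_pow_left (by omega) k
    have h2 : 1 ≤ (m + 1) ^ k := Nat.one_le_pow _ _ (by omega)
    have h3 : L ≤ L ^ k := Nat.le_self_pow (by omega) _
    calc c m = 2 * k * (m ^ k + N) := rfl
    _ ≤ 2 * k * ((m + 1) ^ k + N * (m + 1) ^ k) := by
        have : m ^ k + N ≤ (m + 1) ^ k + N * (m + 1) ^ k := by nlinarith
        exact Nat.mul_le_mul_left _ this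
    _ = L * (m + 1) ^ k := by rw [hL]; ring
    _ ≤ L ^ k * (m + 1) ^ k := Nat.mul_le_mul_right _ h3
    _ = (L * (m + 1)) ^ k := (mul_pow L (m + 1) k).symm
  have hsle : ∀ m : ℕ, μ {ω | (L * (m + 1)) ^ k < X 1 ω} ≤ μ (s (m + 1)) := by
    intro m
    have hid := (hident (m + 1)).measure_mem_eq (s := Set.Ioi (c m)) measurableSet_Ioi
    have hmono : {ω | (L * (m + 1)) ^ k < X 1 ω} ⊆ X 1 ⁻¹' Set.Ioi (c m) := by
      intro ω hω
      simp only [Set.mem_setOf_eq] at hω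
      simp only [Set.mem_preimage, Set.mem_Ioi]
      exact lt_of_le_of_lt (harith m) hω
    calc μ {ω | (L * (m + 1)) ^ k < X 1 ω} ≤ μ (X 1 ⁻¹' Set.Ioi (c m)) := measure_mono hmono
    _ = μ (X (m + 1) ⁻¹' Set.Ioi (c m)) := hid.symm
    _ = μ (s (m + 1)) := by
        rw [hsdef]
        simp
  have hdiv : ∑' n : ℕ, μ (s n) = ⊤ := by
    rw [tsum_eq_zero_add' ENNReal.summable]
    have : ∑' m : ℕ, μ (s (m + 1)) = ⊤ := by
      rw [← top_le_iff, ← htail]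
      exact ENNReal.tsum_le_tsum hsle
    rw [this, add_top]
  have hBC := measure_limsup_eq_one hsm hindepS hdiv
  -- the completeness event avoids the limsup
  have hTsub : {ω | ∀ m : ℕ, N ≤ m →
      ∃ s : Finset ℕ, s.card = k ∧ (∀ i ∈ s, 1 ≤ i) ∧ ∑ i ∈ s, W i ω = m}
      ⊆ (Filter.limsup s Filter.atTop)ᶜ := by
    intro ω hω hlim
    rw [Filter.mem_limsup_iff_frequently_mem] at hlim
    obtain ⟨n, hn, hmem⟩ := Filter.frequently_atTop.mp hlim (max N 1 + 1)
    obtain ⟨m, rfl⟩ : ∃ m, n = m + 1 := ⟨n - 1, by omega⟩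
    have hmN : N ≤ m := by
      have := le_max_left N 1
      omega
    have hm1 : 1 ≤ m := by
      have := le_max_right N 1
      omega
    have hmem' : c m < X (m + 1) ω := by
      have : ω ∈ X (m + 1) ⁻¹' Set.Ioi (c (m + 1 - 1)) := hmem
      simpa using this
    have hdet := stmt4_aux_det k N m hk (fun j => W j ω) (hWmono ω) (hWge ω) hω hmN hm1
    have hWs := hWsucc m ω
    have hcm : c m = 2 * k * (m ^ k + N) := rfl
    have hdet' : W (m + 1) ω ≤ W m ω + 2 * k * (m ^ k + N) := hdet
    omega
  refine measure_mono_null hTsub ?_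
  have hms : MeasurableSet (Filter.limsup s Filter.atTop) := MeasurableSet.measurableSet_limsup hsm
  rw [measure_compl hms (measure_ne_top μ _), hBC, measure_univ]
  simp
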